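/- Under the null hypothesis, let (U₁,Δ₁), …, (Uₙ,Δₙ) be i.i.d. copies of (U,Δ) and let K : [0,1]×[0,1] → ℝ be a measurable kernel with |K| ≤ M. Writing ᾱₙ = (1/n)·Σᵢ₌₁ⁿ α_{Uᵢ,Δᵢ} for the measure associated with the censoring-adjusted empirical distribution F̃, one has E[MMD²_K(ᾱₙ, λ)] ≤ 4M/n, where λ is Lebesgue measure on [0,1]. -/

import Mathlib

open MeasureTheory ProbabilityTheory Set Filter
open scoped ENNReal Topology

/-- The probability measure `α_{u,δ}` on `[0,1]`: Dirac mass at `u` if `δ = 1`,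
uniform on `(u,1)` if `δ = 0`. -/
noncomputable def alphaMeas (u : ℝ) (δ : Bool) : Measure ℝ :=
  if δ then Measure.dirac u
  else ENNReal.ofReal (1 / (1 - u)) • volume.restrict (Set.Ioo u 1)

/-- `∫∫ K(x,y) d(μ−ν)(x) d(μ'−ν')(y)`, expanded by bilinearity. -/
noncomputable def pairIntDiff (K : ℝ → ℝ → ℝ) (μ ν μ' ν' : Measure ℝ) : ℝ :=
  (∫ x, ∫ y, K x y ∂μ' ∂μ) - (∫ x, ∫ y, K x y ∂ν' ∂μ)
    - (∫ x, ∫ y, K x y ∂μ' ∂ν) + (∫ x, ∫ y, K x y ∂ν' ∂ν)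

/-- `MMD²_K(μ,ν) = ∫∫ K(x,y) d(μ−ν)(x) d(μ−ν)(y)`. -/
noncomputable def mmdSq (K : ℝ → ℝ → ℝ) (μ ν : Measure ℝ) : ℝ :=
  pairIntDiff K μ ν μ ν

lemma alphaMeas_univ_le (u : ℝ) (δ : Bool) : alphaMeas u δ Set.univ ≤ 1 := by
  cases δ with
  | true => simp [alphaMeas]
  | false =>
    simp only [alphaMeas, Bool.false_eq_true, if_false, Measure.smul_apply, smul_eq_mul,
      Measure.restrict_apply MeasurableSet.univ, Set.univ_inter, Real.volume_Ioo]
    rcases le_or_gt 1 u with h | h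
    · rw [ENNReal.ofReal_eq_zero.2 (by linarith : 1 - u ≤ 0)]
      simp
    · rw [← ENNReal.ofReal_mul (div_nonneg zero_le_one (by linarith)), one_div,
        inv_mul_cancel₀ (by linarith : (1:ℝ) - u ≠ 0), ENNReal.ofReal_one]

instance alphaMeas_finite (u : ℝ) (δ : Bool) : IsFiniteMeasure (alphaMeas u δ) :=
  ⟨lt_of_le_of_lt (alphaMeas_univ_le u δ) ENNReal.one_lt_top⟩

lemma alphaMeas_compl_Icc {u : ℝ} (hu : u ∈ Set.Icc (0:ℝ) 1) (δ : Bool) :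
    alphaMeas u δ (Set.Icc (0:ℝ) 1)ᶜ = 0 := by
  cases δ with
  | true =>
    simp only [alphaMeas, if_true]
    rw [Measure.dirac_apply' _ (measurableSet_Icc.compl)]
    simp [Set.indicator_apply, hu]
  | false =>
    simp only [alphaMeas, Bool.false_eq_true, if_false, Measure.smul_apply, smul_eq_mul,
      Measure.restrict_apply measurableSet_Icc.compl]
    have : (Set.Icc (0:ℝ) 1)ᶜ ∩ Set.Ioo u 1 = ∅ := by
      apply Set.eq_empty_of_forall_notMem
      rintro x ⟨hx, hx2⟩
      exact hx ⟨le_of_lt (lt_of_le_of_lt hu.1 hx2.1), le_of_lt hx2.2⟩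
    rw [this]
    simp

lemma abs_integral_alphaMeas_le {f : ℝ → ℝ} {B : ℝ} (hB : 0 ≤ B) (hf : ∀ x, |f x| ≤ B)
    (u : ℝ) (δ : Bool) : |∫ x, f x ∂alphaMeas u δ| ≤ B := by
  calc |∫ x, f x ∂alphaMeas u δ| ≤ B * ((alphaMeas u δ) Set.univ).toReal := by
        have := norm_integral_le_of_norm_le_const (μ := alphaMeas u δ) (f := f) (C := B)
            (ae_of_all _ fun x => by simpa [Real.norm_eq_abs] using hf x)
        simpa [Real.norm_eq_abs, measureReal_def] using this
    _ ≤ B * 1 := by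
        gcongr
        exact ENNReal.toReal_mono ENNReal.one_ne_top (alphaMeas_univ_le u δ) |>.trans_eq
          ENNReal.toReal_one
    _ = B := mul_one B

lemma integrable_of_bdd {α : Type*} [MeasurableSpace α] {μ : Measure α} [IsFiniteMeasure μ]
    {f : α → ℝ} (hf : AEStronglyMeasurable f μ) {B : ℝ} (hB : ∀ x, |f x| ≤ B) :
    Integrable f μ :=
  (integrable_const B).mono' hf (ae_of_all _ fun x => by simpa [Real.norm_eq_abs] using hB x)

lemma integral_alphaMeas_eq {γ : Type*} (h : γ → ℝ → ℝ) (c : γ) (u : ℝ) (δ : Bool) :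
    ∫ x, h c x ∂alphaMeas u δ =
      if δ then h c u
      else if u < 1 then (1 - u)⁻¹ * ∫ x in Set.Ioc u 1, h c x else 0 := by
  cases δ with
  | true => simp [alphaMeas, integral_dirac]
  | false =>
    simp only [alphaMeas, Bool.false_eq_true, if_false, integral_smul_measure]
    rcases lt_or_ge u 1 with hu | hu
    · rw [if_pos hu, ENNReal.toReal_ofReal (div_nonneg zero_le_one (by linarith)),
        ← integral_Ioc_eq_integral_Ioo]
      simp [one_div, smul_eq_mul]
    · rw [if_neg (not_lt.2 hu),
        ENNReal.ofReal_eq_zero.2 (by apply div_nonpos_of_nonneg_of_nonpos <;> linarith)]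
      simp

lemma measurable_integral_alphaMeas {γ : Type*} [MeasurableSpace γ] {h : γ × ℝ → ℝ}
    (hh : Measurable h) :
    Measurable fun cp : γ × (ℝ × Bool) => ∫ x, h (cp.1, x) ∂alphaMeas cp.2.1 cp.2.2 := by
  have hint : Measurable fun cp : γ × (ℝ × Bool) => ∫ x in Set.Ioc cp.2.1 1, h (cp.1, x) := by
    have hrep : (fun cp : γ × (ℝ × Bool) => ∫ x in Set.Ioc cp.2.1 1, h (cp.1, x)) =
        fun cp => ∫ x, (if cp.2.1 < x ∧ x ≤ 1 then h (cp.1, x) else 0) := by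
      funext cp
      rw [← integral_indicator measurableSet_Ioc]
      congr 1
      funext x
      simp [Set.indicator_apply, Set.mem_Ioc]
    rw [hrep]
    have hsm : StronglyMeasurable fun q : (γ × (ℝ × Bool)) × ℝ =>
        if q.1.2.1 < q.2 ∧ q.2 ≤ 1 then h (q.1.1, q.2) else 0 := by
      apply Measurable.stronglyMeasurable
      exact Measurable.ite
        ((measurableSet_lt (measurable_fst.comp (measurable_snd.comp measurable_fst))
            measurable_snd).inter (measurableSet_le measurable_snd measurable_const))
        (hh.comp ((measurable_fst.comp measurable_fst).prodMk measurable_snd))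
        measurable_const
    exact (hsm.integral_prod_right' (ν := volume)).measurable
  have key : (fun cp : γ × (ℝ × Bool) => ∫ x, h (cp.1, x) ∂alphaMeas cp.2.1 cp.2.2) =
      fun cp => if cp.2.2 = true then h (cp.1, cp.2.1)
        else if cp.2.1 < 1 then (1 - cp.2.1)⁻¹ * ∫ x in Set.Ioc cp.2.1 1, h (cp.1, x) else 0 := by
    funext cp
    rw [integral_alphaMeas_eq (fun c x => h (c, x))]
  rw [key]
  have hs1 : MeasurableSet {cp : γ × (ℝ × Bool) | cp.2.2 = true} :=
    (measurable_snd.comp measurable_snd) (measurableSet_singleton true)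
  have hb1 : Measurable fun cp : γ × (ℝ × Bool) => h (cp.1, cp.2.1) :=
    hh.comp (measurable_fst.prodMk (measurable_fst.comp measurable_snd))
  have hs2 : MeasurableSet {cp : γ × (ℝ × Bool) | cp.2.1 < 1} :=
    measurableSet_lt (measurable_fst.comp measurable_snd) measurable_const
  have hinv : Measurable fun cp : γ × (ℝ × Bool) => (1 - cp.2.1)⁻¹ :=
    (measurable_const.sub (measurable_fst.comp measurable_snd)).inv
  exact Measurable.ite hs1 hb1 (Measurable.ite hs2 (hinv.mul hint) measurable_const)

section CDF

variable {ρ : Measure ℝ} [IsProbabilityMeasure ρ] {F : ℝ → ℝ}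

lemma cdf_mono (hF : ∀ t, F t = (ρ (Set.Iic t)).toReal) : Monotone F := fun a b hab => by
  rw [hF, hF]
  exact ENNReal.toReal_mono (measure_ne_top _ _) (measure_mono (Set.Iic_subset_Iic.2 hab))

lemma cdf_mem_Icc (hF : ∀ t, F t = (ρ (Set.Iic t)).toReal) (x : ℝ) :
    F x ∈ Set.Icc (0:ℝ) 1 := by
  constructor
  · rw [hF]; exact ENNReal.toReal_nonneg
  · rw [hF]
    exact (ENNReal.toReal_mono ENNReal.one_ne_top prob_le_one).trans_eq ENNReal.toReal_one

lemma cdf_ofReal (hF : ∀ t, F t = (ρ (Set.Iic t)).toReal) (x : ℝ) :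
    ENNReal.ofReal (F x) = ρ (Set.Iic x) := by
  rw [hF]
  exact ENNReal.ofReal_toReal (measure_ne_top _ _)

lemma measure_cdf_le (hFc : Continuous F) (hF : ∀ t, F t = (ρ (Set.Iic t)).toReal) (t : ℝ) :
    ρ {x | F x ≤ t} = ENNReal.ofReal (min t 1) := by
  have hmono := cdf_mono hF
  rcases lt_or_ge t 0 with ht | ht
  · have he : {x | F x ≤ t} = ∅ :=
      Set.eq_empty_of_forall_notMem fun x hx => absurd ((cdf_mem_Icc hF x).1.trans hx) (not_le.2 ht)
    rw [he, measure_empty, Eq.comm, ENNReal.ofReal_eq_zero]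
    exact (min_le_left _ _).trans ht.le
  rcases le_or_gt 1 t with ht1 | ht1
  · have he : {x | F x ≤ t} = Set.univ :=
      Set.eq_univ_of_forall fun x => (cdf_mem_Icc hF x).2.trans ht1
    rw [he, measure_univ, min_eq_right ht1, ENNReal.ofReal_one]
  · rw [min_eq_left ht1.le]
    set S := {x | F x ≤ t} with hSdef
    have hclosed : IsClosed S := isClosed_Iic.preimage hFc
    have htop : Tendsto (fun x => ρ (Set.Iic x)) atTop (𝓝 (1 : ℝ≥0∞)) := by
      simpa [measure_univ] using tendsto_measure_Iic_atTop ρ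
    have htopF : Tendsto F atTop (𝓝 (1:ℝ)) := by
      have h2 := (ENNReal.tendsto_toReal ENNReal.one_ne_top).comp htop
      simp only [Function.comp_def, ENNReal.toReal_one] at h2
      have : F = fun x => (ρ (Set.Iic x)).toReal := funext hF
      rw [this]
      exact h2
    obtain ⟨x₁, hx₁⟩ : ∃ x, t < F x := (htopF.eventually (eventually_gt_nhds ht1)).exists
    have hbdd : BddAbove S := by
      refine ⟨x₁, fun x hx => ?_⟩
      by_contra hlt
      push_neg at hlt
      exact absurd ((hmono hlt.le).trans hx) (not_le.2 hx₁)
    by_cases hne : S.Nonempty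
    · have hsmem : sSup S ∈ S := hclosed.csSup_mem hne hbdd
      have hSeq : S = Set.Iic (sSup S) := by
        apply Set.Subset.antisymm
        · exact fun x hx => le_csSup hbdd hx
        · exact fun x hx => le_trans (hmono hx) hsmem
      have h1 : F (sSup S) ≤ t := hsmem
      have h2 : t ≤ F (sSup S) := by
        have hev : ∀ x ∈ Set.Ioi (sSup S), t ≤ F x := fun x hx =>
          le_of_lt (lt_of_not_ge fun h => absurd (le_csSup hbdd h) (not_le.2 hx))
        have hcont : Tendsto F (𝓝[>] (sSup S)) (𝓝 (F (sSup S))) :=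
          (hFc.tendsto _).mono_left nhdsWithin_le_nhds
        rcases (nhdsGT_neBot (sSup S)) with _
        exact ge_of_tendsto hcont (eventually_nhdsWithin_of_forall hev)
      rw [hSeq, ← cdf_ofReal hF, le_antisymm h1 h2]
    · rw [Set.not_nonempty_iff_eq_empty] at hne
      have hbot : Tendsto (fun x => ρ (Set.Iic x)) atBot (𝓝 (ρ (⋂ x : ℝ, Set.Iic x))) :=
        tendsto_measure_iInter_atBot (fun i => nullMeasurableSet_Iic)
          (fun a b hab => Set.Iic_subset_Iic.2 hab) ⟨0, measure_ne_top _ _⟩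
      have hempty : ⋂ x : ℝ, Set.Iic x = ∅ := by
        ext y
        simp only [Set.mem_iInter, Set.mem_Iic, Set.mem_empty_iff_false, iff_false, not_forall,
          not_le]
        exact ⟨y - 1, by linarith⟩
      rw [hempty, measure_empty] at hbot
      have hbotF : Tendsto F atBot (𝓝 (0:ℝ)) := by
        have h2 := (ENNReal.tendsto_toReal ENNReal.zero_ne_top).comp hbot
        simp only [Function.comp_def, ENNReal.toReal_zero] at h2
        have : F = fun x => (ρ (Set.Iic x)).toReal := funext hF
        rw [this]
        exact h2
      have hletop : ∀ x, t ≤ F x := fun x =>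
        le_of_lt (lt_of_not_ge fun h => (Set.eq_empty_iff_forall_notMem.1 hne x) h)
      have ht0 : t ≤ 0 := ge_of_tendsto' hbotF hletop
      rw [hne, measure_empty, Eq.comm, ENNReal.ofReal_eq_zero]
      exact ht0

lemma map_cdf_restrict (hFc : Continuous F) (hF : ∀ t, F t = (ρ (Set.Iic t)).toReal) (c : ℝ) :
    Measure.map F (ρ.restrict (Set.Iic c)) = volume.restrict (Set.Ioc 0 (F c)) := by
  have hFm : Measurable F := hFc.measurable
  have hfin : IsFiniteMeasure (Measure.map F (ρ.restrict (Set.Iic c))) :=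
    Measure.isFiniteMeasure_map _ _
  refine Measure.ext_of_Iic _ _ fun t => ?_
  rw [Measure.map_apply hFm measurableSet_Iic, Measure.restrict_apply (hFm measurableSet_Iic),
    Measure.restrict_apply measurableSet_Iic, Set.inter_comm (Set.Iic t), Set.Ioc_inter_Iic,
    Real.volume_Ioc, sub_zero]
  rcases le_or_gt (F c) t with h | h
  · have hsub : Set.Iic c ⊆ F ⁻¹' (Set.Iic t) := fun x hx => le_trans (cdf_mono hF hx) h
    rw [Set.inter_eq_self_of_subset_right hsub, ← cdf_ofReal hF, min_eq_left h]
  · have hsub : F ⁻¹' (Set.Iic t) ⊆ Set.Iic c := fun x hx => by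
      by_contra hxc
      simp only [Set.mem_Iic, not_le] at hxc
      exact absurd ((cdf_mono hF hxc.le).trans hx) (not_le.2 h)
    have hpre : F ⁻¹' Set.Iic t = {x | F x ≤ t} := rfl
    rw [Set.inter_eq_self_of_subset_left hsub, hpre, measure_cdf_le hFc hF, min_eq_right h.le,
      min_eq_left (h.le.trans (cdf_mem_Icc hF c).2)]

lemma setIntegral_cdf (hFc : Continuous F) (hF : ∀ t, F t = (ρ (Set.Iic t)).toReal)
    {g : ℝ → ℝ} (hg : Measurable g) (c : ℝ) :
    ∫ x in Set.Iic c, g (F x) ∂ρ = ∫ u in Set.Ioc 0 (F c), g u := by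
  rw [← map_cdf_restrict hFc hF c,
    integral_map hFc.measurable.aemeasurable hg.aestronglyMeasurable]

end CDF

lemma measurable_integral_alphaMeas_simple {g : ℝ → ℝ} (hg : Measurable g) :
    Measurable fun p : ℝ × Bool => ∫ x, g x ∂alphaMeas p.1 p.2 := by
  have h := measurable_integral_alphaMeas (γ := ℝ) (h := fun q => g q.2) (hg.comp measurable_snd)
  have h2 := h.comp ((measurable_const : Measurable fun _ : ℝ × Bool => (0:ℝ)).prodMk
    measurable_id)
  exact h2

lemma integral_meanAlpha
    {Ω : Type*} [MeasurableSpace Ω] (P : Measure Ω) [IsProbabilityMeasure P]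
    (X C : Ω → ℝ) (hX : Measurable X) (hC : Measurable C) (hXC : IndepFun X C P)
    (F₀ : ℝ → ℝ) (hF₀c : Continuous F₀) (hF₀ : ∀ t : ℝ, F₀ t = (P {ω | X ω ≤ t}).toReal)
    {g : ℝ → ℝ} (hg : Measurable g) {B : ℝ} (hB : ∀ x, |g x| ≤ B) :
    ∫ ω, (∫ y, g y ∂alphaMeas (F₀ (min (X ω) (C ω))) (decide (X ω ≤ C ω))) ∂P
      = ∫ y in Set.Icc (0:ℝ) 1, g y := by
  have hB0 : 0 ≤ B := (abs_nonneg (g 0)).trans (hB 0)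
  set ρ : Measure ℝ := Measure.map X P with hρ
  have : IsProbabilityMeasure ρ := Measure.isProbabilityMeasure_map hX.aemeasurable
  set ρC : Measure ℝ := Measure.map C P with hρC
  have : IsProbabilityMeasure ρC := Measure.isProbabilityMeasure_map hC.aemeasurable
  have hFρ : ∀ t : ℝ, F₀ t = (ρ (Set.Iic t)).toReal := by
    intro t
    rw [hρ, Measure.map_apply hX measurableSet_Iic, hF₀ t]
    rfl
  have hφ : Measurable fun p : ℝ × Bool => ∫ x, g x ∂alphaMeas p.1 p.2 :=
    measurable_integral_alphaMeas_simple hg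
  set H : ℝ × ℝ → ℝ := fun q =>
    if q.2 ≤ q.1 then g (F₀ q.2) else ∫ y, g y ∂alphaMeas (F₀ q.1) false with hHdef
  have hHmeas : Measurable H := by
    apply Measurable.ite (measurableSet_le measurable_snd measurable_fst)
    · exact hg.comp (hF₀c.measurable.comp measurable_snd)
    · exact hφ.comp ((hF₀c.measurable.comp measurable_fst).prodMk measurable_const)
  have hHbdd : ∀ q, |H q| ≤ B := by
    intro q
    simp only [hHdef]
    by_cases h : q.2 ≤ q.1
    · rw [if_pos h]; exact hB _
    · rw [if_neg h]; exact abs_integral_alphaMeas_le hB0 hB _ _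
  have hpt : ∀ ω, (∫ y, g y ∂alphaMeas (F₀ (min (X ω) (C ω))) (decide (X ω ≤ C ω)))
      = H (C ω, X ω) := by
    intro ω
    by_cases hxc : X ω ≤ C ω
    · rw [decide_eq_true hxc, min_eq_left hxc]
      simp only [hHdef]
      rw [if_pos hxc, integral_alphaMeas_eq (fun _ x => g x) ()]
      simp
    · have hcx : C ω ≤ X ω := le_of_lt (not_le.1 hxc)
      rw [decide_eq_false hxc, min_eq_right hcx]
      simp only [hHdef]
      rw [if_neg hxc]
  simp only [hpt]
  have hmap : Measure.map (fun ω => (C ω, X ω)) P = ρC.prod ρ :=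
    (indepFun_iff_map_prod_eq_prod_map_map hC.aemeasurable hX.aemeasurable).1 hXC.symm
  rw [← integral_map (hC.prodMk hX).aemeasurable hHmeas.aestronglyMeasurable, hmap]
  have hHint : Integrable H (ρC.prod ρ) := integrable_of_bdd hHmeas.aestronglyMeasurable hHbdd
  rw [integral_prod _ hHint]
  have hinner : ∀ c : ℝ, ∫ x, H (c, x) ∂ρ = ∫ y in Set.Ioc (0:ℝ) 1, g y := by
    intro c
    have hu01 := cdf_mem_Icc hFρ c
    have hintc : Integrable (fun x => H (c, x)) ρ :=
      integrable_of_bdd (hHmeas.comp (measurable_const.prodMk measurable_id)).aestronglyMeasurable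
        (fun x => hHbdd _)
    rw [← integral_add_compl measurableSet_Iic hintc, Set.compl_Iic]
    have e1 : ∀ x ∈ Set.Iic c, H (c, x) = g (F₀ x) := fun x hx => by
      simp only [hHdef]
      exact if_pos hx
    have h1 : ∫ x in Set.Iic c, H (c, x) ∂ρ = ∫ u in Set.Ioc 0 (F₀ c), g u :=
      (setIntegral_congr_fun measurableSet_Iic e1).trans (setIntegral_cdf hF₀c hFρ hg c)
    have e2 : ∀ x ∈ Set.Ioi c, H (c, x) = ∫ y, g y ∂alphaMeas (F₀ c) false := fun x hx => by
      simp only [hHdef]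
      exact if_neg (not_le.2 hx)
    have h2 : ∫ x in Set.Ioi c, H (c, x) ∂ρ = ∫ u in Set.Ioc (F₀ c) 1, g u := by
      rw [setIntegral_congr_fun measurableSet_Ioi e2, setIntegral_const,
        integral_alphaMeas_eq (fun _ x => g x) ()]
      simp only [Bool.false_eq_true, if_false]
      have hIoi : (ρ (Set.Ioi c)).toReal = 1 - F₀ c := by
        rw [← Set.compl_Iic, measure_compl measurableSet_Iic (measure_ne_top _ _), measure_univ,
          ENNReal.toReal_sub_of_le prob_le_one ENNReal.one_ne_top, ENNReal.toReal_one, hFρ c]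
      rw [measureReal_def, hIoi]
      rcases lt_or_eq_of_le hu01.2 with hlt | heq
      · rw [if_pos hlt, smul_eq_mul, ← mul_assoc, mul_inv_cancel₀ (by linarith), one_mul]
      · rw [heq, if_neg (lt_irrefl 1), smul_zero, Set.Ioc_self, Measure.restrict_empty,
          integral_zero_measure]
    rw [h1, h2, ← setIntegral_union (Set.Ioc_disjoint_Ioc_of_le le_rfl) measurableSet_Ioc]
    · rw [Set.Ioc_union_Ioc_eq_Ioc hu01.1 hu01.2]
    · exact Measure.integrableOn_of_bounded measure_Ioc_lt_top.ne hg.aestronglyMeasurable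
        (ae_of_all _ fun x => by simpa [Real.norm_eq_abs] using hB x)
    · exact Measure.integrableOn_of_bounded measure_Ioc_lt_top.ne hg.aestronglyMeasurable
        (ae_of_all _ fun x => by simpa [Real.norm_eq_abs] using hB x)
  simp only [hinner, integral_const, probReal_univ, measure_univ, ENNReal.toReal_one, one_smul]
  exact (integral_Icc_eq_integral_Ioc).symm

lemma abs_integral_le_of_mass_le {α : Type*} [MeasurableSpace α] {μ : Measure α}
    [IsFiniteMeasure μ] (hμ : μ Set.univ ≤ 1) {f : α → ℝ} {B : ℝ} (hB0 : 0 ≤ B)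
    (hf : ∀ x, |f x| ≤ B) : |∫ x, f x ∂μ| ≤ B := by
  calc |∫ x, f x ∂μ| ≤ B * (μ Set.univ).toReal := by
        have := norm_integral_le_of_norm_le_const (μ := μ) (f := f) (C := B)
          (ae_of_all _ fun x => by simpa [Real.norm_eq_abs] using hf x)
        simpa [Real.norm_eq_abs, measureReal_def] using this
    _ ≤ B * 1 := by
        gcongr
        exact (ENNReal.toReal_mono ENNReal.one_ne_top hμ).trans_eq ENNReal.toReal_one
    _ = B := mul_one B

lemma mmdSq_avg_expand {K : ℝ → ℝ → ℝ} (hKm : Measurable (Function.uncurry K)) {M : ℝ}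
    (hKb : ∀ x y, |K x y| ≤ M) {n : ℕ} (hn : 0 < n) (m : Fin n → Measure ℝ)
    (hmle : ∀ i, (m i) Set.univ ≤ 1) (hfin : ∀ i, IsFiniteMeasure (m i)) :
    mmdSq K ((n : ℝ≥0∞)⁻¹ • ∑ i, m i) (volume.restrict (Set.Icc (0:ℝ) 1)) =
      ((n:ℝ)⁻¹)^2 * ∑ i, ∑ j, pairIntDiff K (m i) (volume.restrict (Set.Icc (0:ℝ) 1)) (m j)
        (volume.restrict (Set.Icc (0:ℝ) 1)) := by
  haveI := hfin
  have hM0 : 0 ≤ M := (abs_nonneg _).trans (hKb 0 0)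
  set ν : Measure ℝ := volume.restrict (Set.Icc (0:ℝ) 1) with hν
  haveI hνprob : IsProbabilityMeasure ν := by
    constructor
    rw [hν, Measure.restrict_apply_univ, Real.volume_Icc]
    norm_num
  have hν1 : ν Set.univ ≤ 1 := le_of_eq hνprob.measure_univ
  have hn0 : (n : ℝ) ≠ 0 := Nat.cast_ne_zero.2 hn.ne'
  -- section measurability and bounds
  have hsec : ∀ x : ℝ, Measurable fun y => K x y := fun x =>
    hKm.comp (measurable_const.prodMk measurable_id)
  have hinner_meas : ∀ μ' : Measure ℝ, SFinite μ' → Measurable fun x => ∫ y, K x y ∂μ' := by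
    intro μ' hsf
    exact (hKm.stronglyMeasurable.integral_prod_right' (ν := μ')).measurable
  have hint_sec : ∀ (i : Fin n) (x : ℝ), Integrable (fun y => K x y) (m i) := fun i x =>
    integrable_of_bdd (hsec x).aestronglyMeasurable (fun y => hKb x y)
  have hint_secν : ∀ x : ℝ, Integrable (fun y => K x y) ν := fun x =>
    integrable_of_bdd (hsec x).aestronglyMeasurable (fun y => hKb x y)
  have hinner_bdd : ∀ (i : Fin n) (x : ℝ), |∫ y, K x y ∂m i| ≤ M := fun i x =>
    abs_integral_le_of_mass_le (hmle i) hM0 (fun y => hKb x y)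
  have hinnerν_bdd : ∀ x : ℝ, |∫ y, K x y ∂ν| ≤ M := fun x =>
    abs_integral_le_of_mass_le hν1 hM0 (fun y => hKb x y)
  -- generic: integral over the average measure
  have key : ∀ (f : ℝ → ℝ), (∀ i : Fin n, Integrable f (m i)) →
      ∫ x, f x ∂((n : ℝ≥0∞)⁻¹ • ∑ i, m i) = (n:ℝ)⁻¹ * ∑ i, ∫ x, f x ∂m i := by
    intro f hint
    rw [integral_smul_measure, integral_finset_sum_measure (fun i _ => hint i)]
    simp [smul_eq_mul]
  -- inner integral over the average measure
  have inner_avg : ∀ x : ℝ, ∫ y, K x y ∂((n : ℝ≥0∞)⁻¹ • ∑ i, m i)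
      = (n:ℝ)⁻¹ * ∑ j, ∫ y, K x y ∂m j := fun x => key _ (fun i => hint_sec i x)
  set avg : Measure ℝ := (n : ℝ≥0∞)⁻¹ • ∑ i, m i with havg
  have hinner_meas' : ∀ i : Fin n, Measurable fun x => ∫ y, K x y ∂m i := fun i =>
    hinner_meas (m i) inferInstance
  have hinner_measν : Measurable fun x => ∫ y, K x y ∂ν := hinner_meas ν inferInstance
  have hintc1 : ∀ i j : Fin n, Integrable (fun x => ∫ y, K x y ∂m j) (m i) := fun i j =>
    integrable_of_bdd (hinner_meas' j).aestronglyMeasurable (hinner_bdd j)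
  have hintc1ν : ∀ j : Fin n, Integrable (fun x => ∫ y, K x y ∂m j) ν := fun j =>
    integrable_of_bdd (hinner_meas' j).aestronglyMeasurable (hinner_bdd j)
  have hintc2 : ∀ i : Fin n, Integrable (fun x => ∫ y, K x y ∂ν) (m i) := fun i =>
    integrable_of_bdd hinner_measν.aestronglyMeasurable hinnerν_bdd
  have e1 : ∫ x, (∫ y, K x y ∂avg) ∂avg
      = (n:ℝ)⁻¹ * ∑ i, ((n:ℝ)⁻¹ * ∑ j, ∫ x, (∫ y, K x y ∂m j) ∂m i) := by
    have h0 : (fun x => ∫ y, K x y ∂avg) = fun x => (n:ℝ)⁻¹ * ∑ j, ∫ y, K x y ∂m j :=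
      funext inner_avg
    rw [havg, key _ (fun i => by
      rw [← havg, h0]
      exact (integrable_finset_sum _ (fun j _ => hintc1 i j)).const_mul _)]
    congr 1
    refine Finset.sum_congr rfl fun i _ => ?_
    rw [← havg, h0, integral_const_mul, integral_finset_sum _ (fun j _ => hintc1 i j)]
  have e2 : ∫ x, (∫ y, K x y ∂ν) ∂avg = (n:ℝ)⁻¹ * ∑ i, ∫ x, (∫ y, K x y ∂ν) ∂m i := by
    rw [havg, key _ hintc2]
  have e3 : ∫ x, (∫ y, K x y ∂avg) ∂ν = (n:ℝ)⁻¹ * ∑ j, ∫ x, (∫ y, K x y ∂m j) ∂ν := by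
    have h0 : (fun x => ∫ y, K x y ∂avg) = fun x => (n:ℝ)⁻¹ * ∑ j, ∫ y, K x y ∂m j :=
      funext inner_avg
    rw [h0, integral_const_mul, integral_finset_sum _ (fun j _ => hintc1ν j)]
  have e4 : ∀ i : Fin n, ∑ j : Fin n, pairIntDiff K (m i) ν (m j) ν =
      (∑ j, ∫ x, (∫ y, K x y ∂m j) ∂m i) - (n : ℝ) * ∫ x, (∫ y, K x y ∂ν) ∂m i
        - (∑ j, ∫ x, (∫ y, K x y ∂m j) ∂ν) + (n : ℝ) * ∫ x, (∫ y, K x y ∂ν) ∂ν := by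
    intro i
    simp only [pairIntDiff]
    rw [Finset.sum_add_distrib, Finset.sum_sub_distrib, Finset.sum_sub_distrib,
      Finset.sum_const, Finset.sum_const, Finset.card_univ, Fintype.card_fin]
    simp only [nsmul_eq_mul]
  show pairIntDiff K avg ν avg ν = _
  rw [pairIntDiff, e1, e2, e3, Finset.sum_congr rfl (fun i _ => e4 i), Finset.sum_add_distrib,
    Finset.sum_sub_distrib, Finset.sum_sub_distrib, ← Finset.mul_sum, ← Finset.mul_sum,
    Finset.sum_const, Finset.sum_const, Finset.card_univ, Fintype.card_fin]
  simp only [nsmul_eq_mul]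
  field_simp


/-- Under the null hypothesis, for an i.i.d. sample
`(U₁,Δ₁), …, (Uₙ,Δₙ)` of `(U,Δ)` and a measurable kernel `K` with `|K| ≤ M` on
`[0,1]²`, writing `ᾱₙ = (1/n)·Σᵢ α_{Uᵢ,Δᵢ}` for the measure of the
censoring-adjusted empirical distribution `F̃`:
`E[MMD²_K(ᾱₙ, λ)] ≤ 4M/n`, where `λ` is Lebesgue measure on `[0,1]`. -/
theorem expectation_mmdSq_null_le
    {Ω Ω' : Type*} [MeasurableSpace Ω] [MeasurableSpace Ω']
    (P : Measure Ω) [IsProbabilityMeasure P]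
    (P' : Measure Ω') [IsProbabilityMeasure P']
    (X C : Ω → ℝ) (hX : Measurable X) (hC : Measurable C)
    (hXC : IndepFun X C P)
    (F₀ : ℝ → ℝ) (hF₀c : Continuous F₀)
    (hF₀ : ∀ t : ℝ, F₀ t = (P {ω | X ω ≤ t}).toReal)
    (K : ℝ → ℝ → ℝ) (hK : Measurable (Function.uncurry K))
    (M : ℝ) (hM : ∀ x ∈ Set.Icc (0:ℝ) 1, ∀ y ∈ Set.Icc (0:ℝ) 1, |K x y| ≤ M)
    (n : ℕ) (hn : 0 < n) (W : Fin n → Ω' → ℝ × Bool)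
    (hWm : ∀ i, Measurable (W i))
    (hWindep : iIndepFun W P')
    (hWdist : ∀ i, IdentDistrib (W i)
      (fun ω => (F₀ (min (X ω) (C ω)), decide (X ω ≤ C ω))) P' P) :
    ∫ ω, mmdSq K ((n : ℝ≥0∞)⁻¹ • ∑ i, alphaMeas (W i ω).1 (W i ω).2)
        (volume.restrict (Set.Icc (0:ℝ) 1)) ∂P' ≤ 4 * M / n := by
  classical
  have hM0 : 0 ≤ M := (abs_nonneg _).trans
    (hM 0 ⟨le_refl 0, zero_le_one⟩ 0 ⟨le_refl 0, zero_le_one⟩)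
  set ν : Measure ℝ := volume.restrict (Set.Icc (0:ℝ) 1) with hνdef
  haveI hνprob : IsProbabilityMeasure ν := by
    constructor
    rw [hνdef, Measure.restrict_apply_univ, Real.volume_Icc]
    norm_num
  have hν1 : ν Set.univ ≤ 1 := le_of_eq hνprob.measure_univ
  have hn0 : (n : ℝ) ≠ 0 := Nat.cast_ne_zero.2 hn.ne'
  set K' : ℝ → ℝ → ℝ :=
    fun x y => if x ∈ Set.Icc (0:ℝ) 1 ∧ y ∈ Set.Icc (0:ℝ) 1 then K x y else 0 with hK'def
  have hK'm : Measurable (Function.uncurry K') := by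
    apply Measurable.ite _ hK measurable_const
    exact (measurable_fst measurableSet_Icc).inter (measurable_snd measurableSet_Icc)
  have hK'b : ∀ x y, |K' x y| ≤ M := fun x y => by
    simp only [hK'def]
    split_ifs with h
    · exact hM x h.1 y h.2
    · simpa using hM0
  have hK'eq : ∀ x y, x ∈ Set.Icc (0:ℝ) 1 → y ∈ Set.Icc (0:ℝ) 1 → K' x y = K x y :=
    fun x y hx hy => if_pos ⟨hx, hy⟩
  -- the distribution of each sample
  have hδm : Measurable fun ω => decide (X ω ≤ C ω) := by
    have : (fun ω => decide (X ω ≤ C ω)) = fun ω => if X ω ≤ C ω then true else false := by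
      funext ω
      by_cases h : X ω ≤ C ω <;> simp [h]
    rw [this]
    exact Measurable.ite (measurableSet_le hX hC) measurable_const measurable_const
  have hpairm : Measurable fun ω => (F₀ (min (X ω) (C ω)), decide (X ω ≤ C ω)) :=
    (hF₀c.measurable.comp (hX.min hC)).prodMk hδm
  have hsample : ∀ (i : Fin n) (g : ℝ → ℝ), Measurable g → ∀ B : ℝ, (∀ x, |g x| ≤ B) →
      ∫ ω, (∫ y, g y ∂alphaMeas (W i ω).1 (W i ω).2) ∂P' = ∫ y in Set.Icc (0:ℝ) 1, g y := by
    intro i g hg B hB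
    have hφg := measurable_integral_alphaMeas_simple hg
    have h1 : ∫ ω, (∫ y, g y ∂alphaMeas (W i ω).1 (W i ω).2) ∂P'
        = ∫ p, (∫ y, g y ∂alphaMeas p.1 p.2) ∂(Measure.map (W i) P') :=
      (integral_map (hWm i).aemeasurable hφg.aestronglyMeasurable).symm
    rw [h1, (hWdist i).map_eq]
    have h2 : ∫ p, (∫ y, g y ∂alphaMeas p.1 p.2)
          ∂(Measure.map (fun ω => (F₀ (min (X ω) (C ω)), decide (X ω ≤ C ω))) P)
        = ∫ ω, (∫ y, g y ∂alphaMeas (F₀ (min (X ω) (C ω))) (decide (X ω ≤ C ω))) ∂P :=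
      integral_map hpairm.aemeasurable hφg.aestronglyMeasurable
    rw [h2]
    exact integral_meanAlpha P X C hX hC hXC F₀ hF₀c hF₀ hg hB
  -- a.e. the sample values lie in [0,1]
  have hF01 : ∀ t, F₀ t ∈ Set.Icc (0:ℝ) 1 := by
    intro t
    have hFρ : ∀ t : ℝ, F₀ t = ((Measure.map X P) (Set.Iic t)).toReal := by
      intro t
      rw [Measure.map_apply hX measurableSet_Iic, hF₀ t]
      rfl
    haveI : IsProbabilityMeasure (Measure.map X P) := Measure.isProbabilityMeasure_map hX.aemeasurable
    exact cdf_mem_Icc hFρ t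
  have hae : ∀ᵐ ω ∂P', ∀ i, (W i ω).1 ∈ Set.Icc (0:ℝ) 1 := by
    rw [ae_all_iff]
    intro i
    rw [ae_iff]
    have hSm : MeasurableSet {p : ℝ × Bool | p.1 ∈ Set.Icc (0:ℝ) 1} :=
      measurable_fst measurableSet_Icc
    have hset : {ω | ¬(W i ω).1 ∈ Set.Icc (0:ℝ) 1}
        = (W i) ⁻¹' {p : ℝ × Bool | p.1 ∈ Set.Icc (0:ℝ) 1}ᶜ := rfl
    rw [hset, ← Measure.map_apply (hWm i) hSm.compl, (hWdist i).map_eq,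
      Measure.map_apply hpairm hSm.compl]
    have : (fun ω => (F₀ (min (X ω) (C ω)), decide (X ω ≤ C ω))) ⁻¹'
        {p : ℝ × Bool | p.1 ∈ Set.Icc (0:ℝ) 1}ᶜ = ∅ := by
      apply Set.eq_empty_of_forall_notMem
      intro ω hω
      exact hω (hF01 _)
    rw [this, measure_empty]
  -- the building blocks
  set inner2 : ℝ × (ℝ × Bool) → ℝ := fun z => ∫ y, K' z.1 y ∂alphaMeas z.2.1 z.2.2 with hinner2def
  have hinner2m : Measurable inner2 :=
    measurable_integral_alphaMeas (h := Function.uncurry K') hK'm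
  have hinner2b : ∀ z, |inner2 z| ≤ M := fun z => abs_integral_alphaMeas_le hM0 (hK'b z.1) _ _
  set dblf : (ℝ × Bool) × (ℝ × Bool) → ℝ :=
    fun pq => ∫ x, inner2 (x, pq.2) ∂alphaMeas pq.1.1 pq.1.2 with hdblfdef
  have hdblm : Measurable dblf := by
    have h := measurable_integral_alphaMeas (γ := ℝ × Bool)
      (h := fun qx : (ℝ × Bool) × ℝ => inner2 (qx.2, qx.1))
      (hinner2m.comp (measurable_snd.prodMk measurable_fst))
    have h2 := h.comp (measurable_swap : Measurable (Prod.swap : (ℝ × Bool) × (ℝ × Bool) → _))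
    simpa [Function.comp_def] using h2
  have hdblb : ∀ pq, |dblf pq| ≤ M := fun pq =>
    abs_integral_alphaMeas_le hM0 (fun x => hinner2b _) _ _
  set gK : ℝ → ℝ := fun x => ∫ y, K' x y ∂ν with hgKdef
  have hgKm : Measurable gK := (hK'm.stronglyMeasurable.integral_prod_right' (ν := ν)).measurable
  have hgKb : ∀ x, |gK x| ≤ M := fun x => abs_integral_le_of_mass_le hν1 hM0 (hK'b x)
  set f3 : (ℝ × Bool) → ℝ := fun q => ∫ x, inner2 (x, q) ∂ν with hf3def
  have hf3m : Measurable f3 :=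
    (((hinner2m.comp (measurable_snd.prodMk
      measurable_fst)).stronglyMeasurable.integral_prod_right' (ν := ν))).measurable
  have hf3b : ∀ q, |f3 q| ≤ M := fun q => abs_integral_le_of_mass_le hν1 hM0 fun x => hinner2b _
  set t4 : ℝ := ∫ x, gK x ∂ν with ht4def
  have ht4b : |t4| ≤ M := abs_integral_le_of_mass_le hν1 hM0 hgKb
  -- expectations of the pieces
  have E2 : ∀ i, ∫ ω, (∫ x, gK x ∂alphaMeas (W i ω).1 (W i ω).2) ∂P' = t4 := fun i =>
    hsample i gK hgKm M hgKb
  have E3 : ∀ j, ∫ ω, f3 (W j ω) ∂P' = t4 := by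
    intro j
    have hint : Integrable (Function.uncurry fun ω x => inner2 (x, W j ω)) (P'.prod ν) :=
      integrable_of_bdd ((hinner2m.comp
        (measurable_snd.prodMk ((hWm j).comp measurable_fst)))).aestronglyMeasurable
        (fun z => hinner2b _)
    calc ∫ ω, f3 (W j ω) ∂P' = ∫ ω, ∫ x, inner2 (x, W j ω) ∂ν ∂P' := rfl
      _ = ∫ x, ∫ ω, inner2 (x, W j ω) ∂P' ∂ν := integral_integral_swap hint
      _ = ∫ x, gK x ∂ν := by
          refine integral_congr_ae (ae_of_all _ fun x => ?_)
          exact hsample j (fun y => K' x y)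
            (hK'm.comp (measurable_const.prodMk measurable_id)) M (hK'b x)
      _ = t4 := rfl
  have E1 : ∀ i j, i ≠ j → ∫ ω, dblf (W i ω, W j ω) ∂P' = t4 := by
    intro i j hij
    have hindep : IndepFun (W i) (W j) P' := hWindep.indepFun hij
    have hmap2 : Measure.map (fun ω => (W i ω, W j ω)) P'
        = (Measure.map (W i) P').prod (Measure.map (W j) P') :=
      (indepFun_iff_map_prod_eq_prod_map_map (hWm i).aemeasurable (hWm j).aemeasurable).1 hindep
    haveI : IsProbabilityMeasure (Measure.map (W i) P') :=
      Measure.isProbabilityMeasure_map (hWm i).aemeasurable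
    haveI : IsProbabilityMeasure (Measure.map (W j) P') :=
      Measure.isProbabilityMeasure_map (hWm j).aemeasurable
    have h1 : ∫ ω, dblf (W i ω, W j ω) ∂P'
        = ∫ z, dblf z ∂((Measure.map (W i) P').prod (Measure.map (W j) P')) := by
      rw [← hmap2]
      exact (integral_map ((hWm i).prodMk (hWm j)).aemeasurable
        hdblm.aestronglyMeasurable).symm
    rw [h1, integral_prod _ (integrable_of_bdd hdblm.aestronglyMeasurable hdblb)]
    have hin : ∀ p : ℝ × Bool, ∫ q, dblf (p, q) ∂(Measure.map (W j) P')
        = ∫ x, gK x ∂alphaMeas p.1 p.2 := by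
      intro p
      have hback : ∫ q, dblf (p, q) ∂(Measure.map (W j) P') = ∫ ω, dblf (p, W j ω) ∂P' :=
        integral_map (hWm j).aemeasurable
          ((hdblm.comp measurable_prodMk_left).aestronglyMeasurable)
      rw [hback]
      have hint2 : Integrable (Function.uncurry fun ω x => inner2 (x, W j ω))
          (P'.prod (alphaMeas p.1 p.2)) :=
        integrable_of_bdd ((hinner2m.comp
          (measurable_snd.prodMk ((hWm j).comp measurable_fst)))).aestronglyMeasurable
          (fun z => hinner2b _)
      calc ∫ ω, dblf (p, W j ω) ∂P'
          = ∫ ω, ∫ x, inner2 (x, W j ω) ∂alphaMeas p.1 p.2 ∂P' := rfl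
        _ = ∫ x, ∫ ω, inner2 (x, W j ω) ∂P' ∂alphaMeas p.1 p.2 := integral_integral_swap hint2
        _ = ∫ x, gK x ∂alphaMeas p.1 p.2 := by
            refine integral_congr_ae (ae_of_all _ fun x => ?_)
            exact hsample j (fun y => K' x y)
              (hK'm.comp (measurable_const.prodMk measurable_id)) M (hK'b x)
    simp only [hin]
    have hback2 : ∫ p, (∫ x, gK x ∂alphaMeas p.1 p.2) ∂(Measure.map (W i) P')
        = ∫ ω, (∫ x, gK x ∂alphaMeas (W i ω).1 (W i ω).2) ∂P' :=
      integral_map (hWm i).aemeasurable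
        (measurable_integral_alphaMeas_simple hgKm).aestronglyMeasurable
    rw [hback2, E2 i]
  -- identification of pairIntDiff with the pieces
  have hDeq : ∀ (i j : Fin n) (ω : Ω'),
      pairIntDiff K' (alphaMeas (W i ω).1 (W i ω).2) ν (alphaMeas (W j ω).1 (W j ω).2) ν
        = dblf (W i ω, W j ω) - (∫ x, gK x ∂alphaMeas (W i ω).1 (W i ω).2)
          - f3 (W j ω) + t4 := fun i j ω => rfl
  -- integrabilities over P'
  have hIdbl : ∀ i j : Fin n, Integrable (fun ω => dblf (W i ω, W j ω)) P' := fun i j =>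
    integrable_of_bdd ((hdblm.comp ((hWm i).prodMk (hWm j))).aestronglyMeasurable)
      (fun ω => hdblb _)
  have hIphi : ∀ i : Fin n,
      Integrable (fun ω => ∫ x, gK x ∂alphaMeas (W i ω).1 (W i ω).2) P' := fun i =>
    integrable_of_bdd (((measurable_integral_alphaMeas_simple hgKm).comp
      (hWm i)).aestronglyMeasurable) (fun ω => abs_integral_alphaMeas_le hM0 hgKb _ _)
  have hIf3 : ∀ j : Fin n, Integrable (fun ω => f3 (W j ω)) P' := fun j =>
    integrable_of_bdd ((hf3m.comp (hWm j)).aestronglyMeasurable) (fun ω => hf3b _)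
  have hID : ∀ i j : Fin n, Integrable (fun ω =>
      pairIntDiff K' (alphaMeas (W i ω).1 (W i ω).2) ν (alphaMeas (W j ω).1 (W j ω).2) ν) P' := by
    intro i j
    have : (fun ω => pairIntDiff K' (alphaMeas (W i ω).1 (W i ω).2) ν
        (alphaMeas (W j ω).1 (W j ω).2) ν) = fun ω => dblf (W i ω, W j ω)
          - (∫ x, gK x ∂alphaMeas (W i ω).1 (W i ω).2) - f3 (W j ω) + t4 :=
      funext fun ω => hDeq i j ω
    rw [this]
    exact (((hIdbl i j).sub (hIphi i)).sub (hIf3 j)).add (integrable_const t4)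
  -- off-diagonal expectations vanish
  have hED : ∀ i j : Fin n, i ≠ j → ∫ ω, pairIntDiff K' (alphaMeas (W i ω).1 (W i ω).2) ν
      (alphaMeas (W j ω).1 (W j ω).2) ν ∂P' = 0 := by
    intro i j hij
    simp only [hDeq]
    have hA : Integrable (fun ω => dblf (W i ω, W j ω)
        - (∫ x, gK x ∂alphaMeas (W i ω).1 (W i ω).2)) P' := (hIdbl i j).sub (hIphi i)
    have hB : Integrable (fun ω => dblf (W i ω, W j ω)
        - (∫ x, gK x ∂alphaMeas (W i ω).1 (W i ω).2) - f3 (W j ω)) P' := hA.sub (hIf3 j)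
    rw [integral_add hB (integrable_const _), integral_sub hA (hIf3 j),
      integral_sub (hIdbl i j) (hIphi i), E1 i j hij, E2 i, E3 j, integral_const]
    simp only [probReal_univ, measure_univ, ENNReal.toReal_one, one_smul]
    ring
  -- diagonal expectations are bounded
  have hEDiag : ∀ i : Fin n, ∫ ω, pairIntDiff K' (alphaMeas (W i ω).1 (W i ω).2) ν
      (alphaMeas (W i ω).1 (W i ω).2) ν ∂P' ≤ 4 * M := by
    intro i
    have hb : ∀ ω, |pairIntDiff K' (alphaMeas (W i ω).1 (W i ω).2) ν
        (alphaMeas (W i ω).1 (W i ω).2) ν| ≤ 4 * M := by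
      intro ω
      rw [hDeq i i ω]
      obtain ⟨l1, r1⟩ := abs_le.1 (hdblb (W i ω, W i ω))
      obtain ⟨l2, r2⟩ := abs_le.1 (abs_integral_alphaMeas_le hM0 hgKb (W i ω).1 (W i ω).2)
      obtain ⟨l3, r3⟩ := abs_le.1 (hf3b (W i ω))
      obtain ⟨l4, r4⟩ := abs_le.1 ht4b
      rw [abs_le]
      constructor <;> linarith
    calc ∫ ω, pairIntDiff K' (alphaMeas (W i ω).1 (W i ω).2) ν
          (alphaMeas (W i ω).1 (W i ω).2) ν ∂P'
        ≤ |∫ ω, pairIntDiff K' (alphaMeas (W i ω).1 (W i ω).2) ν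
          (alphaMeas (W i ω).1 (W i ω).2) ν ∂P'| := le_abs_self _
      _ ≤ 4 * M := abs_integral_le_of_mass_le (le_of_eq (measure_univ)) (by linarith) hb
  -- a.e. replace K by K'
  have hcongr : ∀ᵐ ω ∂P', mmdSq K ((n : ℝ≥0∞)⁻¹ • ∑ i, alphaMeas (W i ω).1 (W i ω).2) ν
      = mmdSq K' ((n : ℝ≥0∞)⁻¹ • ∑ i, alphaMeas (W i ω).1 (W i ω).2) ν := by
    refine hae.mono fun ω hω => ?_
    set avg : Measure ℝ := (n : ℝ≥0∞)⁻¹ • ∑ i, alphaMeas (W i ω).1 (W i ω).2 with havgdef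
    have hsupp : ∀ᵐ x ∂avg, x ∈ Set.Icc (0:ℝ) 1 := by
      rw [ae_iff]
      have hzero : avg (Set.Icc (0:ℝ) 1)ᶜ = 0 := by
        rw [havgdef, Measure.smul_apply, Measure.finset_sum_apply]
        rw [Finset.sum_congr rfl fun i _ => alphaMeas_compl_Icc (hω i) _]
        simp
      have : {x : ℝ | ¬x ∈ Set.Icc (0:ℝ) 1} = (Set.Icc (0:ℝ) 1)ᶜ := rfl
      rw [this, hzero]
    have hνae : ∀ᵐ x ∂ν, x ∈ Set.Icc (0:ℝ) 1 := by
      rw [hνdef]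
      exact ae_restrict_mem measurableSet_Icc
    have T : ∀ ρ₁ ρ₂ : Measure ℝ, (∀ᵐ x ∂ρ₁, x ∈ Set.Icc (0:ℝ) 1) →
        (∀ᵐ y ∂ρ₂, y ∈ Set.Icc (0:ℝ) 1) →
        ∫ x, ∫ y, K x y ∂ρ₂ ∂ρ₁ = ∫ x, ∫ y, K' x y ∂ρ₂ ∂ρ₁ := by
      intro ρ₁ ρ₂ h1 h2
      refine integral_congr_ae (h1.mono fun x hx => ?_)
      refine integral_congr_ae (h2.mono fun y hy => ?_)
      exact (hK'eq x y hx hy).symm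
    rw [mmdSq, mmdSq, pairIntDiff, pairIntDiff, T avg avg hsupp hsupp, T avg ν hsupp hνae,
      T ν avg hνae hsupp, T ν ν hνae hνae]
  -- expansion of the squared MMD
  have hexp : ∀ ω : Ω', mmdSq K' ((n : ℝ≥0∞)⁻¹ • ∑ i, alphaMeas (W i ω).1 (W i ω).2) ν
      = ((n:ℝ)⁻¹)^2 * ∑ i, ∑ j, pairIntDiff K' (alphaMeas (W i ω).1 (W i ω).2) ν
        (alphaMeas (W j ω).1 (W j ω).2) ν := fun ω =>
    mmdSq_avg_expand hK'm hK'b hn _ (fun i => alphaMeas_univ_le _ _) (fun i => inferInstance)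
  calc ∫ ω, mmdSq K ((n : ℝ≥0∞)⁻¹ • ∑ i, alphaMeas (W i ω).1 (W i ω).2) ν ∂P'
      = ∫ ω, mmdSq K' ((n : ℝ≥0∞)⁻¹ • ∑ i, alphaMeas (W i ω).1 (W i ω).2) ν ∂P' :=
        integral_congr_ae hcongr
    _ = ∫ ω, ((n:ℝ)⁻¹)^2 * ∑ i, ∑ j, pairIntDiff K' (alphaMeas (W i ω).1 (W i ω).2) ν
        (alphaMeas (W j ω).1 (W j ω).2) ν ∂P' := by simp only [hexp]
    _ = ((n:ℝ)⁻¹)^2 * ∑ i, ∑ j, ∫ ω, pairIntDiff K' (alphaMeas (W i ω).1 (W i ω).2) ν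
        (alphaMeas (W j ω).1 (W j ω).2) ν ∂P' := by
          rw [integral_const_mul, integral_finset_sum _ (fun i _ =>
            integrable_finset_sum _ (fun j _ => hID i j))]
          congr 1
          exact Finset.sum_congr rfl fun i _ =>
            integral_finset_sum _ (fun j _ => hID i j)
    _ = ((n:ℝ)⁻¹)^2 * ∑ i : Fin n, ∫ ω, pairIntDiff K' (alphaMeas (W i ω).1 (W i ω).2) ν
        (alphaMeas (W i ω).1 (W i ω).2) ν ∂P' := by
          congr 1
          refine Finset.sum_congr rfl fun i _ => ?_
          exact Finset.sum_eq_single i (fun j _ hj => hED i j (Ne.symm hj))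
            (fun h => absurd (Finset.mem_univ i) h)
    _ ≤ ((n:ℝ)⁻¹)^2 * ∑ i : Fin n, (4 * M) :=
          mul_le_mul_of_nonneg_left (Finset.sum_le_sum fun i _ => hEDiag i) (by positivity)
    _ = 4 * M / n := by
          rw [Finset.sum_const, Finset.card_univ, Fintype.card_fin, nsmul_eq_mul]
          field_simp
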